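/- The integral of the function t ↦ log|t| / (1 + |t|²)² over ℂ with respect to two-dimensional Lebesgue measure equals 0. -/

import Mathlib

open MeasureTheory Set

lemma radial_integral_zero :
    ∫ r in Set.Ioi (0:ℝ), r * Real.log r / (1 + r ^ 2) ^ 2 = 0 := by
  have h := MeasureTheory.integral_comp_rpow_Ioi
    (fun r : ℝ => r * Real.log r / (1 + r ^ 2) ^ 2) (p := -1) (by norm_num)
  have h2 : (∫ x in Set.Ioi (0:ℝ), (|(-1:ℝ)| * x ^ ((-1:ℝ) - 1)) •
      ((x ^ (-1:ℝ)) * Real.log (x ^ (-1:ℝ)) / (1 + (x ^ (-1:ℝ)) ^ 2) ^ 2))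
      = ∫ x in Set.Ioi (0:ℝ), -(x * Real.log x / (1 + x ^ 2) ^ 2) := by
    apply setIntegral_congr_fun measurableSet_Ioi
    intro x hx
    dsimp only
    have hx0 : (0:ℝ) < x := hx
    have hinv : x ^ (-1:ℝ) = x⁻¹ := by
      rw [Real.rpow_neg hx0.le, Real.rpow_one]
    rw [hinv, Real.log_inv]
    have hx2 : (1 + x⁻¹ ^ 2) = (x ^ 2 + 1) / x ^ 2 := by
      field_simp
    have hpow : x ^ ((-1:ℝ) - 1) = (x ^ 2)⁻¹ := by
      rw [show ((-1:ℝ) - 1) = -2 by norm_num, Real.rpow_neg hx0.le]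
      norm_num
    rw [hx2, hpow]
    have hx2ne : (x:ℝ) ^ 2 ≠ 0 := by positivity
    field_simp
    ring_nf
    field_simp
    ring
  rw [h2, integral_neg] at h
  linarith [h]

theorem integral_log_abs_div_one_add_abs_sq_sq :
    ∫ t : ℂ, Real.log ‖t‖ / (1 + ‖t‖ ^ 2) ^ 2 = 0 := by
  rw [← Complex.integral_comp_polarCoord_symm
    (fun t : ℂ => Real.log ‖t‖ / (1 + ‖t‖ ^ 2) ^ 2)]
  have h1 : (∫ p in polarCoord.target,
      p.1 • (Real.log (‖Complex.polarCoord.symm p‖) /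
        (1 + ‖Complex.polarCoord.symm p‖ ^ 2) ^ 2))
      = ∫ p in Set.Ioi (0:ℝ) ×ˢ Set.Ioo (-Real.pi) Real.pi,
        (p.1 * Real.log p.1 / (1 + p.1 ^ 2) ^ 2) * (1 : ℝ) := by
    rw [polarCoord_target]
    apply setIntegral_congr_fun (by measurability)
    intro p hp
    dsimp only
    have hp1 : (0:ℝ) < p.1 := hp.1
    rw [Complex.norm_polarCoord_symm, abs_of_pos hp1]
    simp [smul_eq_mul]
    ring
  rw [h1, Measure.volume_eq_prod,
    setIntegral_prod_mul (fun r : ℝ => r * Real.log r / (1 + r ^ 2) ^ 2) (fun _ : ℝ => (1:ℝ)),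
    radial_integral_zero, zero_mul]
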